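/- For all t > 0, (1/6)t^2 - (1/180)t^4 < ln(sinh(t)/t). -/

import Mathlib

open Real Set

private lemma aux_nonneg {f f' : ℝ → ℝ}
    (hd : ∀ x ∈ Set.Ici (0:ℝ), HasDerivAt f (f' x) x)
    (h0 : f 0 = 0) (hf' : ∀ x ∈ Set.Ici (0:ℝ), 0 ≤ f' x)
    {t : ℝ} (ht : 0 ≤ t) : 0 ≤ f t := by
  have hmono : MonotoneOn f (Set.Ici (0:ℝ)) := by
    refine monotoneOn_of_deriv_nonneg (convex_Ici 0)
      (fun x hx => (hd x hx).continuousAt.continuousWithinAt)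
      (fun x hx => ?_) (fun x hx => ?_)
    · rw [interior_Ici] at hx
      exact (hd x (Set.mem_Ici.mpr (le_of_lt hx))).differentiableAt.differentiableWithinAt
    · rw [interior_Ici] at hx
      rw [(hd x (Set.mem_Ici.mpr (le_of_lt hx))).deriv]
      exact hf' x (Set.mem_Ici.mpr (le_of_lt hx))
  have := hmono Set.self_mem_Ici (Set.mem_Ici.mpr ht) ht
  linarith [h0 ▸ this]

private lemma cosh_ge2 (t : ℝ) (ht : 0 ≤ t) : 1 + t ^ 2 / 2 ≤ Real.cosh t := by
  have h := aux_nonneg (f := fun x => Real.cosh x - (1 + x ^ 2 / 2))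
      (f' := fun x => Real.sinh x - x) ?_ (by simp) ?_ ht
  · simpa [sub_nonneg] using h
  · intro x _
    have := (Real.hasDerivAt_cosh x).sub (((hasDerivAt_pow 2 x).div_const 2).const_add 1)
    refine this.congr_deriv ?_
    push_cast; ring
  · intro x hx
    simp only [Set.mem_Ici] at hx
    simpa [sub_nonneg] using Real.self_le_sinh_iff.mpr hx

private lemma sinh_ge3 (t : ℝ) (ht : 0 ≤ t) : t + t ^ 3 / 6 ≤ Real.sinh t := by
  have h := aux_nonneg (f := fun x => Real.sinh x - (x + x ^ 3 / 6))
      (f' := fun x => Real.cosh x - (1 + x ^ 2 / 2)) ?_ (by simp) ?_ ht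
  · simpa [sub_nonneg] using h
  · intro x _
    have := (Real.hasDerivAt_sinh x).sub
      ((hasDerivAt_id x).add ((hasDerivAt_pow 3 x).div_const 6))
    refine this.congr_deriv ?_
    push_cast; ring
  · intro x hx
    simpa [sub_nonneg] using cosh_ge2 x hx

private lemma cosh_ge4 (t : ℝ) (ht : 0 ≤ t) :
    1 + t ^ 2 / 2 + t ^ 4 / 24 ≤ Real.cosh t := by
  have h := aux_nonneg (f := fun x => Real.cosh x - (1 + x ^ 2 / 2 + x ^ 4 / 24))
      (f' := fun x => Real.sinh x - (x + x ^ 3 / 6)) ?_ (by simp) ?_ ht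
  · simpa [sub_nonneg] using h
  · intro x _
    have := (Real.hasDerivAt_cosh x).sub
      ((((hasDerivAt_pow 2 x).div_const 2).const_add 1).add ((hasDerivAt_pow 4 x).div_const 24))
    refine this.congr_deriv ?_
    push_cast; ring
  · intro x hx
    simpa [sub_nonneg] using sinh_ge3 x hx

private lemma sinh_ge5 (t : ℝ) (ht : 0 ≤ t) :
    t + t ^ 3 / 6 + t ^ 5 / 120 ≤ Real.sinh t := by
  have h := aux_nonneg (f := fun x => Real.sinh x - (x + x ^ 3 / 6 + x ^ 5 / 120))
      (f' := fun x => Real.cosh x - (1 + x ^ 2 / 2 + x ^ 4 / 24)) ?_ (by simp) ?_ ht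
  · simpa [sub_nonneg] using h
  · intro x _
    have := (Real.hasDerivAt_sinh x).sub
      (((hasDerivAt_id x).add ((hasDerivAt_pow 3 x).div_const 6)).add
        ((hasDerivAt_pow 5 x).div_const 120))
    refine this.congr_deriv ?_
    push_cast; ring
  · intro x hx
    simpa [sub_nonneg] using cosh_ge4 x hx

private lemma cosh_ge6 (t : ℝ) (ht : 0 ≤ t) :
    1 + t ^ 2 / 2 + t ^ 4 / 24 + t ^ 6 / 720 ≤ Real.cosh t := by
  have h := aux_nonneg
      (f := fun x => Real.cosh x - (1 + x ^ 2 / 2 + x ^ 4 / 24 + x ^ 6 / 720))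
      (f' := fun x => Real.sinh x - (x + x ^ 3 / 6 + x ^ 5 / 120)) ?_ (by simp) ?_ ht
  · simpa [sub_nonneg] using h
  · intro x _
    have := (Real.hasDerivAt_cosh x).sub
      (((((hasDerivAt_pow 2 x).div_const 2).const_add 1).add
        ((hasDerivAt_pow 4 x).div_const 24)).add ((hasDerivAt_pow 6 x).div_const 720))
    refine this.congr_deriv ?_
    push_cast; ring
  · intro x hx
    simpa [sub_nonneg] using sinh_ge5 x hx

private lemma sinh_ge7 (t : ℝ) (ht : 0 ≤ t) :
    t + t ^ 3 / 6 + t ^ 5 / 120 + t ^ 7 / 5040 ≤ Real.sinh t := by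
  have h := aux_nonneg
      (f := fun x => Real.sinh x - (x + x ^ 3 / 6 + x ^ 5 / 120 + x ^ 7 / 5040))
      (f' := fun x => Real.cosh x - (1 + x ^ 2 / 2 + x ^ 4 / 24 + x ^ 6 / 720)) ?_ (by simp) ?_ ht
  · simpa [sub_nonneg] using h
  · intro x _
    have := (Real.hasDerivAt_sinh x).sub
      ((((hasDerivAt_id x).add ((hasDerivAt_pow 3 x).div_const 6)).add
        ((hasDerivAt_pow 5 x).div_const 120)).add ((hasDerivAt_pow 7 x).div_const 5040))
    refine this.congr_deriv ?_
    push_cast; ring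
  · intro x hx
    simpa [sub_nonneg] using cosh_ge6 x hx

/-- `2 * artanh` lower bound: for `0 ≤ y < 1`,
`2*(y + y^3/3) ≤ log (1+y) - log (1-y)`. -/
private lemma atanh_lb (y : ℝ) (hy0 : 0 ≤ y) (hy1 : y < 1) :
    2 * (y + y ^ 3 / 3) ≤ Real.log (1 + y) - Real.log (1 - y) := by
  have hmono : MonotoneOn
      (fun x => Real.log (1 + x) - Real.log (1 - x) - 2 * (x + x ^ 3 / 3))
      (Set.Ico (0:ℝ) 1) := by
    have hd : ∀ x ∈ Set.Ico (0:ℝ) 1, HasDerivAt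
        (fun x => Real.log (1 + x) - Real.log (1 - x) - 2 * (x + x ^ 3 / 3))
        (1 / (1 + x) + 1 / (1 - x) - 2 * (1 + x ^ 2)) x := by
      intro x hx
      obtain ⟨hx0, hx1⟩ := hx
      have h1 : (1 + x) ≠ 0 := by linarith
      have h2 : (1 - x) ≠ 0 := by linarith
      have d1 : HasDerivAt (fun x : ℝ => Real.log (1 + x)) (1 / (1 + x)) x := by
        exact ((hasDerivAt_id x).const_add 1).log h1
      have d2 : HasDerivAt (fun x : ℝ => Real.log (1 - x)) (-(1 / (1 - x))) x := by
        have := ((hasDerivAt_id x).const_sub 1).log h2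
        refine this.congr_deriv ?_
        simp [neg_div]
      have d3 : HasDerivAt (fun x : ℝ => 2 * (x + x ^ 3 / 3)) (2 * (1 + x ^ 2)) x := by
        have := (((hasDerivAt_id x).add ((hasDerivAt_pow 3 x).div_const 3)).const_mul 2)
        refine this.congr_deriv ?_
        push_cast; ring
      have := (d1.sub d2).sub d3
      refine this.congr_deriv ?_
      ring
    refine monotoneOn_of_deriv_nonneg (convex_Ico 0 1)
      (fun x hx => (hd x hx).continuousAt.continuousWithinAt)
      (fun x hx => ?_) (fun x hx => ?_)
    · rw [interior_Ico] at hx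
      exact (hd x ⟨le_of_lt hx.1, hx.2⟩).differentiableAt.differentiableWithinAt
    · rw [interior_Ico] at hx
      obtain ⟨hx0, hx1⟩ := hx
      rw [(hd x ⟨le_of_lt hx0, hx1⟩).deriv]
      have h1 : (0:ℝ) < 1 + x := by linarith
      have h2 : (0:ℝ) < 1 - x := by linarith
      rw [div_add_div _ _ (ne_of_gt h1) (ne_of_gt h2)]
      have key : 2 * (1 + x ^ 2) ≤ (1 * (1 - x) + (1 + x) * 1) / ((1 + x) * (1 - x)) := by
        rw [le_div_iff₀ (by positivity)]
        nlinarith [pow_nonneg (le_of_lt hx0) 4]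
      linarith
  have h := hmono (Set.mem_Ico.mpr ⟨le_refl 0, one_pos⟩) (Set.mem_Ico.mpr ⟨hy0, hy1⟩) hy0
  simp only [add_zero, sub_zero, Real.log_one] at h
  norm_num at h
  linarith

theorem log_sinh_div_gt (t : ℝ) (ht : 0 < t) :
    (1 / 6) * t ^ 2 - (1 / 180) * t ^ 4 < Real.log (Real.sinh t / t) := by
  set l : ℝ := t ^ 2 / 6 + t ^ 4 / 120 + t ^ 6 / 5040 with hl_def
  have hl : 0 < l := by positivity
  have hsinh : 1 + l ≤ Real.sinh t / t := by
    rw [le_div_iff₀ ht]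
    have := sinh_ge7 t (le_of_lt ht)
    calc (1 + l) * t = t + t ^ 3 / 6 + t ^ 5 / 120 + t ^ 7 / 5040 := by
          rw [hl_def]; ring
      _ ≤ Real.sinh t := this
  have hlog1 : Real.log (1 + l) ≤ Real.log (Real.sinh t / t) :=
    Real.log_le_log (by positivity) hsinh
  -- apply atanh bound with y = l / (l + 2)
  set y : ℝ := l / (l + 2) with hy_def
  have hq : (0:ℝ) < l + 2 := by linarith
  have hy0 : 0 ≤ y := by positivity
  have hy1 : y < 1 := by
    rw [hy_def, div_lt_one hq]; linarith
  have hat := atanh_lb y hy0 hy1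
  have h1y : 1 + y = (2 * l + 2) / (l + 2) := by
    rw [hy_def]; field_simp; ring
  have h2y : 1 - y = 2 / (l + 2) := by
    rw [hy_def]; field_simp; ring
  have hlogy : Real.log (1 + y) - Real.log (1 - y) = Real.log (1 + l) := by
    rw [h1y, h2y, Real.log_div (by positivity) (ne_of_gt hq),
      Real.log_div (by norm_num) (ne_of_gt hq)]
    have : (2 * l + 2 : ℝ) = 2 * (1 + l) := by ring
    rw [this, Real.log_mul (by norm_num) (by positivity)]
    ring
  rw [hlogy] at hat
  -- final polynomial inequality
  have hpoly : (1 / 6) * t ^ 2 - (1 / 180) * t ^ 4 < 2 * (y + y ^ 3 / 3) := by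
    have expand : 2 * (y + y ^ 3 / 3) = (6 * l * (l + 2) ^ 2 + 2 * l ^ 3) / (3 * (l + 2) ^ 3) := by
      rw [hy_def]; field_simp; ring
    rw [expand, lt_div_iff₀ (by positivity)]
    rw [hl_def]
    nlinarith [pow_pos ht 6, pow_pos ht 8, pow_pos ht 10, pow_pos ht 12,
      pow_pos ht 14, pow_pos ht 16, pow_pos ht 18, pow_pos ht 20, pow_pos ht 22]
  linarith
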